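/- Let (U,V) be a pair of nonnegative random variables such that U is stochastically lower bounded by a uniform variable on [0,1], i.e., P(U ≤ t) ≤ t for all t ∈ [0,1]. Let ν be a probability distribution on (0,∞) and define the shape function β(x) = ∫₀ˣ u dν(u). Then for every c > 0, E[ 1{U ≤ c·β(V)} / V · 1{V > 0} ] ≤ c. -/

import Mathlib

open MeasureTheory

/-- Dependence control condition for shape functions of the form
`β(x) = ∫_{(0,x]} u dν(u)` with `ν` a probability measure on `(0,∞)`:
if `U` is stochastically lower bounded by a uniform on `[0,1]`, then for all `c > 0`,
`E[ 1{U ≤ c β(V)} / V · 1{V > 0} ] ≤ c`. -/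
theorem dependence_control_shape
    {Ω : Type*} [MeasurableSpace Ω] (P : Measure Ω) [IsProbabilityMeasure P]
    (U V : Ω → ℝ) (hU : Measurable U) (hV : Measurable V)
    (hUpos : ∀ ω, 0 ≤ U ω) (hVpos : ∀ ω, 0 ≤ V ω)
    (hUnif : ∀ t : ℝ, t ∈ Set.Icc (0:ℝ) 1 → P {ω | U ω ≤ t} ≤ ENNReal.ofReal t)
    (ν : Measure ℝ) [IsProbabilityMeasure ν] (hν : ν (Set.Ioi (0:ℝ)) = 1)
    (β : ℝ → ℝ) (hβ : ∀ x, β x = ∫ u in Set.Ioc (0:ℝ) x, u ∂ν) :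
    ∀ c : ℝ, 0 < c →
      ∫ ω, (if U ω ≤ c * β (V ω) ∧ 0 < V ω then (V ω)⁻¹ else 0) ∂P ≤ c := by
  intro c hc
  -- integrability of `id` on `Ioc 0 x` wrt ν
  have hInt : ∀ x : ℝ, IntegrableOn (fun u : ℝ => u) (Set.Ioc 0 x) ν := by
    intro x
    have hconst : IntegrableOn (fun _ : ℝ => x) (Set.Ioc 0 x) ν :=
      integrableOn_const (measure_lt_top _ _).ne enorm_ne_top
    refine Integrable.mono hconst measurable_id'.aestronglyMeasurable ?_
    filter_upwards [ae_restrict_mem measurableSet_Ioc] with u hu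
    rw [Real.norm_eq_abs, Real.norm_eq_abs, abs_of_pos hu.1]
    exact hu.2.trans (le_abs_self x)
  have hβnn : ∀ x, 0 ≤ β x := by
    intro x
    rw [hβ x]
    exact setIntegral_nonneg measurableSet_Ioc fun u hu => hu.1.le
  have hβmono : Monotone β := by
    intro x y hxy
    rw [hβ x, hβ y]
    refine setIntegral_mono_set (hInt y) ?_ ?_
    · filter_upwards [ae_restrict_mem measurableSet_Ioc] with u hu using hu.1.le
    · exact HasSubset.Subset.eventuallyLE (Set.Ioc_subset_Ioc_right hxy)
  have hβmeas : Measurable β := hβmono.measurable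
  -- the nonnegative integrand
  set f : Ω → ℝ := fun ω => if U ω ≤ c * β (V ω) ∧ 0 < V ω then (V ω)⁻¹ else 0 with hf
  have hfnn : ∀ ω, 0 ≤ f ω := by
    intro ω; simp only [hf]
    split
    · exact inv_nonneg.2 (hVpos ω)
    · exact le_refl 0
  have hfmeas : Measurable f := by
    apply Measurable.ite _ (hV.inv) measurable_const
    exact (measurableSet_le hU ((hβmeas.comp hV).const_mul c)).inter
      (measurableSet_lt measurable_const hV)
  -- product set for layer cake
  set S : Set (Ω × ℝ) :=
    {p | (U p.1 ≤ c * β (V p.1) ∧ 0 < V p.1) ∧ p.2 ∈ Set.Ioc 0 (V p.1)⁻¹} with hSdef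
  have hS : MeasurableSet S := by
    apply MeasurableSet.inter
    · exact ((measurableSet_le (hU.comp measurable_fst)
        (((hβmeas.comp hV).comp measurable_fst).const_mul c)).inter
        (measurableSet_lt measurable_const (hV.comp measurable_fst)))
    · exact (measurableSet_lt measurable_const measurable_snd).inter
        (measurableSet_le measurable_snd ((hV.comp measurable_fst).inv))
  -- pointwise layer cake
  have layer : ∀ ω, ENNReal.ofReal (f ω)
      = ∫⁻ s, S.indicator (fun _ => 1) (ω, s) := by
    intro ω
    by_cases hω : U ω ≤ c * β (V ω) ∧ 0 < V ω
    · have heq : (fun s => S.indicator (fun _ => (1:ENNReal)) (ω, s))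
          = (Set.Ioc (0:ℝ) (V ω)⁻¹).indicator (fun _ => 1) := by
        ext s
        simp only [Set.indicator_apply, hSdef, Set.mem_setOf_eq, hω, true_and]
      rw [heq, lintegral_indicator measurableSet_Ioc, setLIntegral_one, Real.volume_Ioc, hf]
      simp [hω]
    · have heq : (fun s => S.indicator (fun _ => (1:ENNReal)) (ω, s)) = fun _ => 0 := by
        ext s
        simp only [Set.indicator_apply, hSdef, Set.mem_setOf_eq, hω, false_and, if_false]
      rw [heq, lintegral_zero, hf]
      simp [hω]
  -- the probability bound for a fixed s > 0
  have prob_bound : ∀ s : ℝ, 0 < s →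
      (∫⁻ ω, S.indicator (fun _ => 1) (ω, s) ∂P)
        ≤ ENNReal.ofReal c * ENNReal.ofReal (β s⁻¹) := by
    intro s hs
    have hslice : (fun ω => S.indicator (fun _ => (1:ENNReal)) (ω, s))
        = ({ω | (ω, s) ∈ S}).indicator (fun _ => 1) := by
      ext ω
      simp only [Set.indicator_apply, Set.mem_setOf_eq]
    have hslice_meas : MeasurableSet {ω | (ω, s) ∈ S} :=
      hS.preimage (measurable_id.prodMk measurable_const)
    rw [hslice, lintegral_indicator hslice_meas, setLIntegral_one]
    have hsub : {ω | (ω, s) ∈ S} ⊆ {ω | U ω ≤ c * β s⁻¹} := by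
      intro ω hω
      simp only [hSdef, Set.mem_setOf_eq, Set.mem_Ioc] at hω
      have hVle : V ω ≤ s⁻¹ := (le_inv_comm₀ hs hω.1.2).1 hω.2.2
      have : c * β (V ω) ≤ c * β s⁻¹ :=
        mul_le_mul_of_nonneg_left (hβmono hVle) hc.le
      exact hω.1.1.trans this
    refine le_trans (measure_mono hsub) ?_
    have ht0 : 0 ≤ c * β s⁻¹ := mul_nonneg hc.le (hβnn _)
    rw [← ENNReal.ofReal_mul hc.le]
    by_cases ht1 : c * β s⁻¹ ≤ 1
    · exact hUnif _ ⟨ht0, ht1⟩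
    · calc P {ω | U ω ≤ c * β s⁻¹} ≤ 1 := prob_le_one
        _ = ENNReal.ofReal 1 := by simp
        _ ≤ ENNReal.ofReal (c * β s⁻¹) := ENNReal.ofReal_le_ofReal (le_of_not_ge ht1)
  -- the key integral over s : ∫⁻ s in Ioi 0, ofReal (β s⁻¹) = 1
  have key : (∫⁻ s in Set.Ioi (0:ℝ), ENNReal.ofReal (β s⁻¹)) = 1 := by
    set T : Set (ℝ × ℝ) := {p | 0 < p.1 ∧ (0 < p.2 ∧ p.2 ≤ p.1⁻¹)} with hTdef
    have hT : MeasurableSet T := by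
      refine (measurableSet_lt measurable_const measurable_fst).inter
        ((measurableSet_lt measurable_const measurable_snd).inter
          (measurableSet_le measurable_snd (measurable_fst.inv)))
    have step1 : (∫⁻ s in Set.Ioi (0:ℝ), ENNReal.ofReal (β s⁻¹))
        = ∫⁻ s, ∫⁻ u, T.indicator (fun p => ENNReal.ofReal p.2) (s, u) ∂ν := by
      have hfun : (fun s => ∫⁻ u, T.indicator (fun p => ENNReal.ofReal p.2) (s, u) ∂ν)
          = (Set.Ioi (0:ℝ)).indicator (fun s => ENNReal.ofReal (β s⁻¹)) := by
        ext s
        by_cases hs : 0 < s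
        · have h1 : (fun u => T.indicator (fun p => ENNReal.ofReal p.2) (s, u))
              = (Set.Ioc (0:ℝ) s⁻¹).indicator (fun u => ENNReal.ofReal u) := by
            ext u
            simp only [Set.indicator_apply, hTdef, Set.mem_setOf_eq, Set.mem_Ioc, hs, true_and]
          rw [h1, lintegral_indicator measurableSet_Ioc,
            Set.indicator_of_mem (Set.mem_Ioi.2 hs)]
          rw [hβ s⁻¹, ofReal_integral_eq_lintegral_ofReal (hInt s⁻¹)
            (by filter_upwards [ae_restrict_mem measurableSet_Ioc] with u hu using hu.1.le)]
        · have h1 : (fun u => T.indicator (fun p => ENNReal.ofReal p.2) (s, u))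
              = fun _ => 0 := by
            ext u
            simp only [Set.indicator_apply, hTdef, Set.mem_setOf_eq, hs, false_and, if_false]
          rw [h1, lintegral_zero, Set.indicator_of_notMem (by simpa using hs)]
      rw [hfun, lintegral_indicator measurableSet_Ioi]
    have step2 : (∫⁻ s, ∫⁻ u, T.indicator (fun p => ENNReal.ofReal p.2) (s, u) ∂ν)
        = ∫⁻ u, (∫⁻ s, T.indicator (fun p => ENNReal.ofReal p.2) (s, u)) ∂ν := by
      apply lintegral_lintegral_swap
      exact ((measurable_snd.ennreal_ofReal.indicator hT)).aemeasurable
    have step3 : (∫⁻ u, (∫⁻ s, T.indicator (fun p => ENNReal.ofReal p.2) (s, u)) ∂ν) = 1 := by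
      have hfun : (fun u => ∫⁻ s, T.indicator (fun p => ENNReal.ofReal p.2) (s, u))
          = (Set.Ioi (0:ℝ)).indicator (fun _ => 1) := by
        ext u
        by_cases hu : 0 < u
        · have h1 : (fun s => T.indicator (fun p => ENNReal.ofReal p.2) (s, u))
              = (Set.Ioc (0:ℝ) u⁻¹).indicator (fun _ => ENNReal.ofReal u) := by
            ext s
            simp only [Set.indicator_apply, hTdef, Set.mem_setOf_eq, Set.mem_Ioc, hu, true_and]
            by_cases hs : 0 < s
            · simp only [hs, true_and]
              simp only [le_inv_comm₀ hu hs]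
            · simp [hs]
          rw [h1, lintegral_indicator measurableSet_Ioc, setLIntegral_const, Real.volume_Ioc,
            Set.indicator_of_mem (Set.mem_Ioi.2 hu)]
          rw [sub_zero, ← ENNReal.ofReal_mul hu.le, mul_inv_cancel₀ hu.ne']
          simp
        · have h1 : (fun s => T.indicator (fun p => ENNReal.ofReal p.2) (s, u))
              = fun _ => 0 := by
            ext s
            simp only [Set.indicator_apply, hTdef, Set.mem_setOf_eq, hu, false_and, and_false,
              if_false]
          rw [h1, lintegral_zero, Set.indicator_of_notMem (by simpa using hu)]
      rw [hfun, lintegral_indicator measurableSet_Ioi, setLIntegral_one, hν]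
    rw [step1, step2, step3]
  -- rewrite the integral and conclude
  rw [integral_eq_lintegral_of_nonneg_ae (Filter.Eventually.of_forall hfnn)
    hfmeas.aestronglyMeasurable]
  refine ENNReal.toReal_le_of_le_ofReal hc.le ?_
  calc ∫⁻ ω, ENNReal.ofReal (f ω) ∂P
      = ∫⁻ ω, (∫⁻ s, S.indicator (fun _ => 1) (ω, s)) ∂P := lintegral_congr layer
    _ = ∫⁻ s, ∫⁻ ω, S.indicator (fun _ => 1) (ω, s) ∂P := by
        apply lintegral_lintegral_swap
        exact (measurable_one.indicator hS).aemeasurable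
    _ ≤ ∫⁻ s, (Set.Ioi (0:ℝ)).indicator
          (fun s => ENNReal.ofReal c * ENNReal.ofReal (β s⁻¹)) s := by
        apply lintegral_mono
        intro s
        dsimp only
        by_cases hs : 0 < s
        · rw [Set.indicator_of_mem (Set.mem_Ioi.2 hs)]
          exact prob_bound s hs
        · have h1 : (fun ω => S.indicator (fun _ => (1:ENNReal)) (ω, s)) = fun _ => 0 := by
            ext ω
            simp only [Set.indicator_apply, hSdef, Set.mem_setOf_eq, Set.mem_Ioc]
            have : ¬ (0 < s) := hs
            simp [this]
          rw [h1, lintegral_zero]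
          exact zero_le
    _ = ENNReal.ofReal c * ∫⁻ s in Set.Ioi (0:ℝ), ENNReal.ofReal (β s⁻¹) := by
        rw [lintegral_indicator measurableSet_Ioi, lintegral_const_mul']
        exact ENNReal.ofReal_ne_top
    _ = ENNReal.ofReal c := by rw [key, mul_one]
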